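/- If the order conditions for an s-stage SARK method up to third order hold (Σbᵢ=1; 2Σbᵢa_{ij}=1; 2Σbᵢd_{ij}=1; and the seven third-order conditions), and Ã, M̃₁: ℝ^m → ℝ^m are three times continuously differentiable, then the exact flow Y(τ) and the discrete SARK output Y_τ agree at τ=0 together with their first, second, and third derivatives: Y_τ(0)=Y(0), Y_τ'(0)=Y'(0), Y_τ''(0)=Y''(0), Y_τ'''(0)=Y'''(0); consequently Y(τ) − Y_τ = O(τ⁴) as τ → 0. -/

import Mathlib

open Filter Asymptotics Topology Set

section helpers
variable {E : Type*} [NormedAddCommGroup E] [NormedSpace ℝ E]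
variable {F : Type*} [NormedAddCommGroup F] [NormedSpace ℝ F]

theorem sark_step {n : ℕ} {h : ℝ → E} (hd : Differentiable ℝ h) (h0 : h 0 = 0)
    (ho : (deriv h) =o[𝓝 0] fun τ : ℝ => τ ^ n) :
    h =o[𝓝 0] fun τ : ℝ => τ ^ (n + 1) := by
  rw [isLittleO_iff] at ho ⊢
  intro ε hε
  obtain ⟨δ, hδ, hball⟩ := Metric.eventually_nhds_iff.mp (ho hε)
  refine Metric.eventually_nhds_iff.mpr ⟨δ, hδ, fun τ hτ => ?_⟩
  simp only [Real.dist_eq, sub_zero] at hτ ⊢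
  have hbound : ∀ x : ℝ, |x| ≤ |τ| → ‖deriv h x‖ ≤ ε * |τ| ^ n := by
    intro x hx
    have := hball (y := x) (by rw [Real.dist_eq, sub_zero]; exact lt_of_le_of_lt hx hτ)
    calc ‖deriv h x‖ ≤ ε * ‖x ^ n‖ := this
      _ ≤ ε * |τ| ^ n := by
          rw [Real.norm_eq_abs, abs_pow]
          exact mul_le_mul_of_nonneg_left (pow_le_pow_left₀ (abs_nonneg x) hx n) hε.le
  have key : ‖h τ‖ ≤ ε * |τ| ^ n * |τ| := by
    rcases le_total 0 τ with hτ0 | hτ0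
    · have := norm_image_sub_le_of_norm_deriv_le_segment'
        (f := h) (a := 0) (b := τ) (f' := deriv h) (C := ε * |τ| ^ n)
        (fun x hx => (hd x).hasDerivAt.hasDerivWithinAt)
        (fun x hx => hbound x (by rw [abs_of_nonneg hx.1, abs_of_nonneg hτ0]; exact hx.2.le))
        τ (right_mem_Icc.mpr hτ0)
      simpa [h0, abs_of_nonneg hτ0] using this
    · have := norm_image_sub_le_of_norm_deriv_le_segment'
        (f := h) (a := τ) (b := 0) (f' := deriv h) (C := ε * |τ| ^ n)
        (fun x hx => (hd x).hasDerivAt.hasDerivWithinAt)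
        (fun x hx => hbound x (by rw [abs_of_nonpos (hx.2.le), abs_of_nonpos hτ0]; linarith [hx.1]))
        0 (right_mem_Icc.mpr hτ0)
      rw [h0, zero_sub, norm_neg, zero_sub, abs_of_nonpos hτ0] at this
      simpa [abs_of_nonpos hτ0] using this
  calc ‖h τ‖ ≤ ε * |τ| ^ n * |τ| := key
    _ = ε * ‖τ ^ (n+1)‖ := by rw [Real.norm_eq_abs, abs_pow, pow_succ]; ring

theorem sark_littleO : ∀ (n : ℕ) (h : ℝ → E), ContDiff ℝ n h →
    (∀ k ≤ n, iteratedDeriv k h 0 = 0) → h =o[𝓝 0] fun τ : ℝ => τ ^ n := by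
  intro n
  induction n with
  | zero =>
    intro h hC h0
    have h00 : h 0 = 0 := by simpa [iteratedDeriv_zero] using h0 0 le_rfl
    simp only [pow_zero]
    rw [isLittleO_one_iff]
    simpa [h00] using (hC.continuous.tendsto 0)
  | succ n IH =>
    intro h hC h0
    have hC' : ContDiff ℝ ((n : WithTop ℕ∞) + 1) h := by exact_mod_cast hC
    have hd : Differentiable ℝ h := hC'.differentiable (by simp)
    refine sark_step hd (by simpa [iteratedDeriv_zero] using h0 0 (by omega)) ?_
    refine IH (deriv h) ((contDiff_succ_iff_deriv.mp hC').2.2) fun k hk => ?_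
    rw [← iteratedDeriv_succ']
    exact h0 (k + 1) (by omega)

/-- chain rule at a point -/
theorem sark_hasDerivAt_comp (A : E → F) (f : ℝ → E) (t : ℝ)
    (hA : Differentiable ℝ A) (hf : DifferentiableAt ℝ f t) :
    HasDerivAt (fun τ => A (f τ)) (fderiv ℝ A (f t) (deriv f t)) t :=
  (hA (f t)).hasFDerivAt.comp_hasDerivAt t hf.hasDerivAt

theorem sark_deriv_comp (A : E → F) (f : ℝ → E) (t : ℝ)
    (hA : Differentiable ℝ A) (hf : DifferentiableAt ℝ f t) :
    deriv (fun τ => A (f τ)) t = fderiv ℝ A (f t) (deriv f t) :=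
  (sark_hasDerivAt_comp A f t hA hf).deriv

/-- derivative of τ ↦ τ • g τ -/
theorem sark_hasDerivAt_id_smul (g : ℝ → E) (t : ℝ) (hg : DifferentiableAt ℝ g t) :
    HasDerivAt (fun τ => τ • g τ) (g t + t • deriv g t) t := by
  have := (hasDerivAt_id t).smul hg.hasDerivAt
  exact this.congr_deriv (by simp [add_comm])
open scoped ContDiff

section helpers2
variable {E : Type*} [NormedAddCommGroup E] [NormedSpace ℝ E]

theorem sark_itd_zero (k : ℕ) : iteratedDeriv k (fun _ : ℝ => (0:E)) = fun _ => 0 := by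
  induction k with
  | zero => simp
  | succ k ih => rw [iteratedDeriv_succ', deriv_const']; exact ih

theorem sark_itd_const (c : E) (k : ℕ) : iteratedDeriv (k+1) (fun _ : ℝ => c) 0 = 0 := by
  rw [iteratedDeriv_succ', deriv_const', sark_itd_zero]

theorem sark_itd_add : ∀ (k : ℕ) (f g : ℝ → E), ContDiff ℝ k f → ContDiff ℝ ∞ g →
    iteratedDeriv k (fun x => f x + g x) = fun x => iteratedDeriv k f x + iteratedDeriv k g x := by
  intro k
  induction k with
  | zero => intro f g _ _; simp
  | succ k ih =>
    intro f g hf hg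
    have hf' : ContDiff ℝ ((k : WithTop ℕ∞) + 1) f := by exact_mod_cast hf
    have hfd : Differentiable ℝ f := hf'.differentiable (by simp)
    have hgd : Differentiable ℝ g := hg.differentiable (by simp)
    rw [iteratedDeriv_succ', iteratedDeriv_succ', iteratedDeriv_succ']
    rw [show deriv (fun x => f x + g x) = fun x => deriv f x + deriv g x from
      funext fun x => deriv_add (hfd x) (hgd x)]
    exact ih (deriv f) (deriv g) (contDiff_succ_iff_deriv.mp hf').2.2
      (contDiff_infty_iff_deriv.mp hg).2

theorem sark_itd_smul (w : E) : ∀ (k : ℕ) (f : ℝ → ℝ), ContDiff ℝ ∞ f →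
    iteratedDeriv k (fun x => f x • w) = fun x => iteratedDeriv k f x • w := by
  intro k
  induction k with
  | zero => intro f _; simp
  | succ k ih =>
    intro f hf
    rw [iteratedDeriv_succ', iteratedDeriv_succ']
    rw [show deriv (fun x => f x • w) = fun x => deriv f x • w from
      funext fun x => deriv_smul_const (hf.differentiable (by simp) x) w]
    exact ih (deriv f) (contDiff_infty_iff_deriv.mp hf).2

theorem sark_mono (w : E) (j k : ℕ) :
    iteratedDeriv k (fun x : ℝ => x ^ j • w) 0
      = ((∏ i ∈ Finset.range k, ((j : ℝ) - i)) * 0 ^ (j - k)) • w := by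
  rw [sark_itd_smul w k _ (by exact contDiff_id.pow j : ContDiff ℝ ∞ fun x : ℝ => x ^ j), iteratedDeriv_eq_iterate, iter_deriv_pow']

end helpers2

section helpers3
variable {E : Type*} [NormedAddCommGroup E] [NormedSpace ℝ E]
variable {F : Type*} [NormedAddCommGroup F] [NormedSpace ℝ F]

theorem sark_cd_deriv {n : ℕ} {g : ℝ → E} (hg : ContDiff ℝ (n + 1 : ℕ) g) :
    ContDiff ℝ (n : ℕ) (deriv g) := by
  have hg' : ContDiff ℝ ((n : WithTop ℕ∞) + 1) g := by exact_mod_cast hg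
  exact (contDiff_succ_iff_deriv.mp hg').2.2

/-- second derivative of the composition t ↦ A (f t), as derivative of the
pointwise chain-rule formula. -/
theorem sark_hasDerivAt_fderiv_apply (A : E → F) (f : ℝ → E)
    (hA : ContDiff ℝ 2 A) (hf : ContDiff ℝ 2 f) :
    HasDerivAt (fun t => fderiv ℝ A (f t) (deriv f t))
      (fderiv ℝ (fderiv ℝ A) (f 0) (deriv f 0) (deriv f 0)
        + fderiv ℝ A (f 0) (deriv (deriv f) 0)) 0 := by
  have hA1 : ContDiff ℝ 1 (fderiv ℝ A) := hA.fderiv_right (by norm_num)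
  have hc : HasDerivAt (fun t => fderiv ℝ A (f t)) (fderiv ℝ (fderiv ℝ A) (f 0) (deriv f 0)) 0 :=
    sark_hasDerivAt_comp (fderiv ℝ A) f 0 (hA1.differentiable (by norm_num))
      ((hf.differentiable (by norm_num)) 0)
  have hf' : ContDiff ℝ (1 : ℕ) (deriv f) := sark_cd_deriv (by exact_mod_cast hf)
  have hu : HasDerivAt (deriv f) (deriv (deriv f) 0) 0 :=
    ((hf'.differentiable (by simp)) 0).hasDerivAt
  exact hc.clm_apply hu

/-- first three derivatives at 0 of τ ↦ c + τ • g τ -/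
theorem sark_smul_derivs (g : ℝ → E) (hg : ContDiff ℝ 3 g) (c : E) :
    deriv (fun τ => c + τ • g τ) 0 = g 0 ∧
    deriv (deriv (fun τ => c + τ • g τ)) 0 = (2:ℝ) • deriv g 0 ∧
    deriv (deriv (deriv (fun τ => c + τ • g τ))) 0 = (3:ℝ) • deriv (deriv g) 0 := by
  have hg1 : Differentiable ℝ g := hg.differentiable (by norm_num)
  have hgd : ContDiff ℝ (2 : ℕ) (deriv g) := sark_cd_deriv (by exact_mod_cast hg)
  have hgd1 : Differentiable ℝ (deriv g) := hgd.differentiable (by simp)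
  have hgdd : ContDiff ℝ (1 : ℕ) (deriv (deriv g)) := sark_cd_deriv hgd
  have hgdd1 : Differentiable ℝ (deriv (deriv g)) := hgdd.differentiable (by simp)
  have hF1 : deriv (fun τ => c + τ • g τ) = fun t => g t + t • deriv g t :=
    funext fun t => ((sark_hasDerivAt_id_smul g t (hg1 t)).const_add c).deriv
  have hF2 : deriv (fun t => g t + t • deriv g t)
      = fun t => deriv g t + (deriv g t + t • deriv (deriv g) t) :=
    funext fun t => ((hg1 t).hasDerivAt.add (sark_hasDerivAt_id_smul (deriv g) t (hgd1 t))).deriv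
  refine ⟨by rw [hF1]; simp, ?_, ?_⟩
  · rw [hF1, hF2]
    simp
    module
  · rw [hF1, hF2]
    have h3 : HasDerivAt (fun t => deriv g t + (deriv g t + t • deriv (deriv g) t))
        (deriv (deriv g) 0 + (deriv (deriv g) 0 + (deriv (deriv g) 0 + (0:ℝ) • deriv (deriv (deriv g)) 0))) 0 :=
      (hgd1 0).hasDerivAt.add ((hgd1 0).hasDerivAt.add
        (sark_hasDerivAt_id_smul (deriv (deriv g)) 0 (hgdd1 0)))
    rw [h3.deriv]
    simp
    module

theorem sark_comb4 {ι : Type*} (S : Finset ι) (c w x y z : ι → ℝ) (P Q R T : E) :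
    ∑ i ∈ S, c i • (w i • P + x i • Q + y i • R + z i • T)
      = (∑ i ∈ S, c i * w i) • P + (∑ i ∈ S, c i * x i) • Q
        + (∑ i ∈ S, c i * y i) • R + (∑ i ∈ S, c i * z i) • T := by
  rw [Finset.sum_smul, Finset.sum_smul, Finset.sum_smul, Finset.sum_smul,
    ← Finset.sum_add_distrib, ← Finset.sum_add_distrib, ← Finset.sum_add_distrib]
  exact Finset.sum_congr rfl fun i _ => by simp [smul_add, smul_smul]

theorem sark_comb2 {ι : Type*} (S : Finset ι) (c x y : ι → ℝ) (P Q : E) :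
    ∑ i ∈ S, c i • (x i • P + y i • Q)
      = (∑ i ∈ S, c i * x i) • P + (∑ i ∈ S, c i * y i) • Q := by
  rw [Finset.sum_smul, Finset.sum_smul, ← Finset.sum_add_distrib]
  exact Finset.sum_congr rfl fun i _ => by simp [smul_add, smul_smul]

end helpers3

section itdeq
variable {E : Type*} [NormedAddCommGroup E] [NormedSpace ℝ E]
theorem sark_itd_two (h : ℝ → E) : iteratedDeriv 2 h = deriv (deriv h) := by
  rw [show (2:ℕ) = 1 + 1 from rfl, iteratedDeriv_succ', iteratedDeriv_one]
theorem sark_itd_three (h : ℝ → E) : iteratedDeriv 3 h = deriv (deriv (deriv h)) := by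
  rw [show (3:ℕ) = 2 + 1 from rfl, iteratedDeriv_succ', sark_itd_two]
theorem sark_itd_sub (k : ℕ) (f g : ℝ → E) (hf : ContDiff ℝ k f) (hg : ContDiff ℝ ∞ g) :
    iteratedDeriv k (fun x => f x - g x) = fun x => iteratedDeriv k f x - iteratedDeriv k g x := by
  have hg' : ContDiff ℝ ∞ (fun x => -g x) := hg.neg
  have := sark_itd_add k f (fun x => -g x) hf hg'
  have hneg : ∀ (k:ℕ), iteratedDeriv k (fun x => -g x) = fun x => -(iteratedDeriv k g x) := by
    intro k
    induction k with
    | zero => simp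
    | succ k ih => rw [iteratedDeriv_succ, iteratedDeriv_succ, ih]; simp
  simp only [sub_eq_add_neg, this, hneg]
end itdeq

section polyP
variable {E : Type*} [NormedAddCommGroup E] [NormedSpace ℝ E]
theorem sark_itd_P (k : ℕ) (c w1 w2 w3 w4 : E) :
    iteratedDeriv k (fun x : ℝ => c + (x^1 • w1 + (x^2 • w2 + (x^3 • w3 + x^4 • w4)))) 0
      = iteratedDeriv k (fun _ : ℝ => c) 0
        + (iteratedDeriv k (fun x : ℝ => x^1 • w1) 0
          + (iteratedDeriv k (fun x : ℝ => x^2 • w2) 0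
            + (iteratedDeriv k (fun x : ℝ => x^3 • w3) 0
              + iteratedDeriv k (fun x : ℝ => x^4 • w4) 0))) := by
  have polC : ∀ (j : ℕ) (w : E), ContDiff ℝ ∞ (fun x : ℝ => x ^ j • w) := fun j w =>
    (by exact contDiff_id.pow j : ContDiff ℝ ∞ fun x : ℝ => x ^ j).smul contDiff_const
  have hcast : ∀ (f : ℝ → E), ContDiff ℝ ∞ f → ContDiff ℝ (k : ℕ) f := by
    intro f hf
    exact hf.of_le (by exact_mod_cast le_top)
  have e1 := congrFun (sark_itd_add k (fun _ : ℝ => c)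
    (fun x : ℝ => x^1 • w1 + (x^2 • w2 + (x^3 • w3 + x^4 • w4))) contDiff_const
    ((polC 1 w1).add ((polC 2 w2).add ((polC 3 w3).add (polC 4 w4))))) 0
  have e2 := congrFun (sark_itd_add k (fun x : ℝ => x^1 • w1)
    (fun x : ℝ => x^2 • w2 + (x^3 • w3 + x^4 • w4)) (hcast _ (polC 1 w1))
    ((polC 2 w2).add ((polC 3 w3).add (polC 4 w4)))) 0
  have e3 := congrFun (sark_itd_add k (fun x : ℝ => x^2 • w2)
    (fun x : ℝ => x^3 • w3 + x^4 • w4) (hcast _ (polC 2 w2))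
    ((polC 3 w3).add (polC 4 w4))) 0
  have e4 := congrFun (sark_itd_add k (fun x : ℝ => x^3 • w3)
    (fun x : ℝ => x^4 • w4) (hcast _ (polC 3 w3)) (polC 4 w4)) 0
  rw [e1, e2, e3, e4]
theorem sark_itd_const' (c : E) (k : ℕ) (hk : 1 ≤ k) :
    iteratedDeriv k (fun _ : ℝ => c) 0 = 0 := by
  obtain ⟨k, rfl⟩ : ∃ n, k = n + 1 := ⟨k - 1, by omega⟩
  exact sark_itd_const c k
end polyP

set_option maxHeartbeats 1000000 in
theorem stmt19 {m s : ℕ}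
    (A M1 : (Fin m → ℝ) → (Fin m → ℝ)) (Y₀ : Fin m → ℝ)
    (b : Fin s → ℝ) (a d : Fin s → Fin s → ℝ)
    (Z Y : ℝ → (Fin m → ℝ))
    (Zs : Fin s → ℝ → (Fin m → ℝ)) (Yt : ℝ → (Fin m → ℝ))
    (hA : ContDiff ℝ 3 A) (hM : ContDiff ℝ 3 M1)
    (hZ : ContDiff ℝ 4 Z) (hY : ContDiff ℝ 4 Y)
    (hodeZ : ∀ t : ℝ, deriv Z t = A (Z t) + deriv (fun u => u • M1 (Z u)) t)
    (hodeY : ∀ t : ℝ, deriv Y t = A (Z t))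
    (hZ0 : Z 0 = Y₀) (hY0 : Y 0 = Y₀)
    (hZs : ∀ i τ, Zs i τ
      = Y₀ + τ • ∑ j ∈ Finset.Iio i, (d i j • M1 (Zs j τ) + a i j • A (Zs j τ)))
    (hYt : ∀ τ, Yt τ = Y₀ + τ • ∑ i, b i • A (Zs i τ))
    (hb : ∑ i, b i = 1)
    (h2a : 2 * ∑ i, ∑ j ∈ Finset.Iio i, b i * a i j = 1)
    (h2d : 2 * ∑ i, ∑ j ∈ Finset.Iio i, b i * d i j = 1)
    (h3a : 3 * ∑ i, b i * (∑ j ∈ Finset.Iio i, a i j)^2 = 1)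
    (h3d : 3 * ∑ i, b i * (∑ j ∈ Finset.Iio i, d i j)^2 = 1)
    (h3ad : 3 * ∑ i, b i * (∑ j ∈ Finset.Iio i, a i j) * (∑ j ∈ Finset.Iio i, d i j) = 1)
    (h3aa : 6 * ∑ i, ∑ j ∈ Finset.Iio i, ∑ k ∈ Finset.Iio j, b i * a i j * a j k = 1)
    (h3adk : 6 * ∑ i, ∑ j ∈ Finset.Iio i, ∑ k ∈ Finset.Iio j, b i * a i j * d j k = 1)
    (h3da : 3 * ∑ i, ∑ j ∈ Finset.Iio i, ∑ k ∈ Finset.Iio j, b i * d i j * a j k = 1)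
    (h3dd : 3 * ∑ i, ∑ j ∈ Finset.Iio i, ∑ k ∈ Finset.Iio j, b i * d i j * d j k = 1) :
    Yt 0 = Y 0
    ∧ deriv Yt 0 = deriv Y 0
    ∧ iteratedDeriv 2 Yt 0 = iteratedDeriv 2 Y 0
    ∧ iteratedDeriv 3 Yt 0 = iteratedDeriv 3 Y 0
    ∧ (fun τ : ℝ => Y τ - Yt τ) =O[𝓝 0] (fun τ : ℝ => τ^4) := by
  -- basic differentiability
  have hAd : Differentiable ℝ A := hA.differentiable (by norm_num)
  have hMd : Differentiable ℝ M1 := hM.differentiable (by norm_num)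
  have hZ3 : ContDiff ℝ 3 Z := hZ.of_le (by norm_num)
  -- the inner sum functions
  set S : Fin s → ℝ → (Fin m → ℝ) :=
    fun i τ => ∑ j ∈ Finset.Iio i, (d i j • M1 (Zs j τ) + a i j • A (Zs j τ)) with hSdef
  have hZsEq : ∀ i, Zs i = fun τ => Y₀ + τ • S i τ := fun i => funext (hZs i)
  -- smoothness of the stages
  have hZsC : ∀ i : Fin s, ContDiff ℝ 3 (Zs i) := by
    have key : ∀ (n : ℕ) (i : Fin s), (i : ℕ) < n → ContDiff ℝ 3 (Zs i) := by
      intro n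
      induction n with
      | zero => exact fun i hi => absurd hi (by omega)
      | succ n IH =>
        intro i hi
        rw [hZsEq i]
        refine contDiff_const.add (contDiff_id.smul (ContDiff.sum fun j hj => ?_))
        have hj' : (j : ℕ) < n := by
          have := Finset.mem_Iio.mp hj; omega
        exact ((contDiff_const (c := d i j)).smul (hM.comp (IH j hj'))).add
          ((contDiff_const (c := a i j)).smul (hA.comp (IH j hj')))
    exact fun i => key s i i.isLt
  have hSC : ∀ i, ContDiff ℝ 3 (S i) := fun i =>
    ContDiff.sum fun j _ => ((contDiff_const (c := d i j)).smul (hM.comp (hZsC j))).add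
      ((contDiff_const (c := a i j)).smul (hA.comp (hZsC j)))
  have hZs0 : ∀ i, Zs i 0 = Y₀ := by intro i; rw [hZs]; simp
  -- stage derivatives at 0
  set v : Fin s → (Fin m → ℝ) := fun i => S i 0 with hvdef
  have hZsd : ∀ i, deriv (Zs i) 0 = v i := by
    intro i; rw [hZsEq i]; exact (sark_smul_derivs (S i) (hSC i) Y₀).1
  have hZsdd : ∀ i, deriv (deriv (Zs i)) 0 = (2:ℝ) • deriv (S i) 0 := by
    intro i; rw [hZsEq i]; exact (sark_smul_derivs (S i) (hSC i) Y₀).2.1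
  have hv : ∀ i, v i = (∑ j ∈ Finset.Iio i, d i j) • M1 Y₀
      + (∑ j ∈ Finset.Iio i, a i j) • A Y₀ := by
    intro i
    rw [hvdef]
    simp only [hSdef, hZs0]
    rw [Finset.sum_add_distrib, ← Finset.sum_smul, ← Finset.sum_smul]
  -- derivative of S i at 0
  have hSd : ∀ i, deriv (S i) 0 = ∑ j ∈ Finset.Iio i,
      (d i j • fderiv ℝ M1 Y₀ (v j) + a i j • fderiv ℝ A Y₀ (v j)) := by
    intro i
    have hH : HasDerivAt (S i) (∑ j ∈ Finset.Iio i,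
        (d i j • fderiv ℝ M1 (Zs j 0) (deriv (Zs j) 0)
          + a i j • fderiv ℝ A (Zs j 0) (deriv (Zs j) 0))) 0 := by
      refine HasDerivAt.fun_sum fun j _ => ?_
      exact ((sark_hasDerivAt_comp M1 (Zs j) 0 hMd
          ((hZsC j).differentiable (by norm_num) 0)).const_smul (d i j)).add
        ((sark_hasDerivAt_comp A (Zs j) 0 hAd
          ((hZsC j).differentiable (by norm_num) 0)).const_smul (a i j))
    rw [hH.deriv]
    exact Finset.sum_congr rfl fun j _ => by rw [hZs0, hZsd]
  -- the function g
  set g : ℝ → (Fin m → ℝ) := fun τ => ∑ i, b i • A (Zs i τ) with hgdef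
  have hgC : ContDiff ℝ 3 g :=
    ContDiff.sum fun i _ => (contDiff_const (c := b i)).smul (hA.comp (hZsC i))
  have hYtEq : Yt = fun τ => Y₀ + τ • g τ := funext hYt
  have hg0 : g 0 = A Y₀ := by
    rw [hgdef]; simp only [hZs0]; rw [← Finset.sum_smul, hb, one_smul]
  have hgd : deriv g 0 = ∑ i, b i • fderiv ℝ A Y₀ (v i) := by
    have hH : HasDerivAt g (∑ i, b i • fderiv ℝ A (Zs i 0) (deriv (Zs i) 0)) 0 :=
      HasDerivAt.fun_sum fun i _ => (sark_hasDerivAt_comp A (Zs i) 0 hAd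
        ((hZsC i).differentiable (by norm_num) 0)).const_smul (b i)
    rw [hH.deriv]
    exact Finset.sum_congr rfl fun i _ => by rw [hZs0, hZsd]
  have hgd_fun : deriv g = fun t => ∑ i, b i • fderiv ℝ A (Zs i t) (deriv (Zs i) t) :=
    funext fun t => (HasDerivAt.fun_sum fun i _ => (sark_hasDerivAt_comp A (Zs i) t hAd
      ((hZsC i).differentiable (by norm_num) t)).const_smul (b i)).deriv
  have hgdd : deriv (deriv g) 0 = ∑ i, b i •
      (fderiv ℝ (fderiv ℝ A) Y₀ (v i) (v i)
        + fderiv ℝ A Y₀ ((2:ℝ) • deriv (S i) 0)) := by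
    rw [hgd_fun]
    have hH := HasDerivAt.fun_sum (u := Finset.univ) fun i _ =>
      (sark_hasDerivAt_fderiv_apply A (Zs i) (hA.of_le (by norm_num))
        ((hZsC i).of_le (by norm_num))).fun_const_smul (b i)
    rw [hH.deriv]
    exact Finset.sum_congr rfl fun i _ => by rw [hZs0, hZsd, hZsdd]
  -- Yt derivatives
  obtain ⟨hYt1, hYt2, hYt3⟩ := sark_smul_derivs g hgC Y₀
  rw [← hYtEq] at hYt1 hYt2 hYt3
  -- Z derivatives
  have hMZC : ContDiff ℝ 3 (fun t => M1 (Z t)) := hM.comp hZ3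
  have hMZd : Differentiable ℝ (fun t => M1 (Z t)) := hMZC.differentiable (by norm_num)
  have hMZdC : ContDiff ℝ (2:ℕ) (deriv (fun t => M1 (Z t))) := sark_cd_deriv (by exact_mod_cast hMZC)
  have hZfun : deriv Z = fun t => A (Z t) + (M1 (Z t) + t • deriv (fun u => M1 (Z u)) t) := by
    funext t
    rw [hodeZ t, (sark_hasDerivAt_id_smul (fun u => M1 (Z u)) t (hMZd t)).deriv]
  have hZd0 : deriv Z 0 = A Y₀ + M1 Y₀ := by rw [hZfun]; simp [hZ0]
  have hMZd0 : deriv (fun u => M1 (Z u)) 0 = fderiv ℝ M1 Y₀ (A Y₀ + M1 Y₀) := by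
    rw [(sark_hasDerivAt_comp M1 Z 0 hMd (hZ.differentiable (by norm_num) 0)).deriv, hZ0, hZd0]
  have hZdd0 : deriv (deriv Z) 0 = fderiv ℝ A Y₀ (A Y₀ + M1 Y₀)
      + (2:ℝ) • fderiv ℝ M1 Y₀ (A Y₀ + M1 Y₀) := by
    rw [hZfun]
    have p1 : HasDerivAt (fun t => A (Z t)) (fderiv ℝ A (Z 0) (deriv Z 0)) 0 :=
      sark_hasDerivAt_comp A Z 0 hAd (hZ.differentiable (by norm_num) 0)
    have p2 : HasDerivAt (fun t => M1 (Z t)) (fderiv ℝ M1 (Z 0) (deriv Z 0)) 0 :=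
      sark_hasDerivAt_comp M1 Z 0 hMd (hZ.differentiable (by norm_num) 0)
    have p3 : HasDerivAt (fun t => t • deriv (fun u => M1 (Z u)) t)
        (deriv (fun u => M1 (Z u)) 0 + (0:ℝ) • deriv (deriv (fun u => M1 (Z u))) 0) 0 :=
      sark_hasDerivAt_id_smul (deriv (fun u => M1 (Z u))) 0
        (hMZdC.differentiable (by simp) 0)
    rw [(p1.fun_add (p2.fun_add p3)).deriv, hZ0, hZd0, hMZd0]
    module
  -- Y derivatives
  have hYd : deriv Y = fun t => A (Z t) := funext hodeY
  have hYdd0 : deriv (deriv Y) 0 = fderiv ℝ A Y₀ (A Y₀ + M1 Y₀) := by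
    rw [hYd, (sark_hasDerivAt_comp A Z 0 hAd (hZ.differentiable (by norm_num) 0)).deriv, hZ0, hZd0]
  have hYdd_fun : deriv (deriv Y) = fun t => fderiv ℝ A (Z t) (deriv Z t) := by
    rw [hYd]
    exact funext fun t => (sark_hasDerivAt_comp A Z t hAd (hZ.differentiable (by norm_num) t)).deriv
  have hYddd0 : deriv (deriv (deriv Y)) 0
      = fderiv ℝ (fderiv ℝ A) Y₀ (A Y₀ + M1 Y₀) (A Y₀ + M1 Y₀)
        + fderiv ℝ A Y₀ (fderiv ℝ A Y₀ (A Y₀ + M1 Y₀)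
            + (2:ℝ) • fderiv ℝ M1 Y₀ (A Y₀ + M1 Y₀)) := by
    rw [hYdd_fun]
    rw [(sark_hasDerivAt_fderiv_apply A Z (hA.of_le (by norm_num))
      (hZ.of_le (by norm_num))).deriv, hZ0, hZd0, hZdd0]
  -- scalar consequences of second-order conditions
  have cbd : ∑ i, b i * (∑ j ∈ Finset.Iio i, d i j) = 1/2 := by
    have e : ∑ i, b i * (∑ j ∈ Finset.Iio i, d i j)
        = ∑ i, ∑ j ∈ Finset.Iio i, b i * d i j :=
      Finset.sum_congr rfl fun i _ => Finset.mul_sum _ _ _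
    rw [e]; linarith
  have cba : ∑ i, b i * (∑ j ∈ Finset.Iio i, a i j) = 1/2 := by
    have e : ∑ i, b i * (∑ j ∈ Finset.Iio i, a i j)
        = ∑ i, ∑ j ∈ Finset.Iio i, b i * a i j :=
      Finset.sum_congr rfl fun i _ => Finset.mul_sum _ _ _
    rw [e]; linarith
  have e1 : ∑ i, b i • fderiv ℝ A Y₀ (v i)
      = (∑ i, b i * (∑ j ∈ Finset.Iio i, d i j)) • fderiv ℝ A Y₀ (M1 Y₀)
        + (∑ i, b i * (∑ j ∈ Finset.Iio i, a i j)) • fderiv ℝ A Y₀ (A Y₀) := by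
    rw [← sark_comb2]
    exact Finset.sum_congr rfl fun i _ => by rw [hv i, map_add, map_smul, map_smul]
  have hgdval : deriv g 0 = (1/2 : ℝ) • fderiv ℝ A Y₀ (M1 Y₀)
      + (1/2 : ℝ) • fderiv ℝ A Y₀ (A Y₀) := by
    rw [hgd, e1, cbd, cba]
  have key2 : (2:ℝ) • deriv g 0 = deriv (deriv Y) 0 := by
    rw [hgdval, hYdd0, map_add]; module
  have key3 : (3:ℝ) • deriv (deriv g) 0 = deriv (deriv (deriv Y)) 0 := by
    have cdd : ∑ i, b i * ((∑ j ∈ Finset.Iio i, d i j) * (∑ j ∈ Finset.Iio i, d i j)) = 1/3 := by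
      have e : ∑ i, b i * ((∑ j ∈ Finset.Iio i, d i j) * (∑ j ∈ Finset.Iio i, d i j))
          = ∑ i, b i * (∑ j ∈ Finset.Iio i, d i j)^2 :=
        Finset.sum_congr rfl fun i _ => by ring
      rw [e]; linarith
    have cda : ∑ i, b i * ((∑ j ∈ Finset.Iio i, d i j) * (∑ j ∈ Finset.Iio i, a i j)) = 1/3 := by
      have e : ∑ i, b i * ((∑ j ∈ Finset.Iio i, d i j) * (∑ j ∈ Finset.Iio i, a i j))
          = ∑ i, b i * (∑ j ∈ Finset.Iio i, a i j) * (∑ j ∈ Finset.Iio i, d i j) :=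
        Finset.sum_congr rfl fun i _ => by ring
      rw [e]; linarith
    have cad : ∑ i, b i * ((∑ j ∈ Finset.Iio i, a i j) * (∑ j ∈ Finset.Iio i, d i j)) = 1/3 := by
      have e : ∑ i, b i * ((∑ j ∈ Finset.Iio i, a i j) * (∑ j ∈ Finset.Iio i, d i j))
          = ∑ i, b i * (∑ j ∈ Finset.Iio i, a i j) * (∑ j ∈ Finset.Iio i, d i j) :=
        Finset.sum_congr rfl fun i _ => by ring
      rw [e]; linarith
    have caa : ∑ i, b i * ((∑ j ∈ Finset.Iio i, a i j) * (∑ j ∈ Finset.Iio i, a i j)) = 1/3 := by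
      have e : ∑ i, b i * ((∑ j ∈ Finset.Iio i, a i j) * (∑ j ∈ Finset.Iio i, a i j))
          = ∑ i, b i * (∑ j ∈ Finset.Iio i, a i j)^2 :=
        Finset.sum_congr rfl fun i _ => by ring
      rw [e]; linarith
    have tri : ∀ (c e : Fin s → Fin s → ℝ),
        ∑ i, b i * (2 * ∑ j ∈ Finset.Iio i, c i j * (∑ k ∈ Finset.Iio j, e j k))
          = 2 * ∑ i, ∑ j ∈ Finset.Iio i, ∑ k ∈ Finset.Iio j, b i * c i j * e j k := by
      intro c e
      simp only [Finset.mul_sum]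
      exact Finset.sum_congr rfl fun i _ => Finset.sum_congr rfl fun j _ =>
        Finset.sum_congr rfl fun k _ => by ring
    have q_dd : ∑ i, b i * (2 * ∑ j ∈ Finset.Iio i, d i j * (∑ k ∈ Finset.Iio j, d j k))
        = 2/3 := by rw [tri d d]; linarith
    have q_da : ∑ i, b i * (2 * ∑ j ∈ Finset.Iio i, d i j * (∑ k ∈ Finset.Iio j, a j k))
        = 2/3 := by rw [tri d a]; linarith
    have q_ad : ∑ i, b i * (2 * ∑ j ∈ Finset.Iio i, a i j * (∑ k ∈ Finset.Iio j, d j k))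
        = 1/3 := by rw [tri a d]; linarith
    have q_aa : ∑ i, b i * (2 * ∑ j ∈ Finset.Iio i, a i j * (∑ k ∈ Finset.Iio j, a j k))
        = 1/3 := by rw [tri a a]; linarith
    rw [hgdd, hYddd0]
    have hterm : ∀ i : Fin s,
        b i • (fderiv ℝ (fderiv ℝ A) Y₀ (v i) (v i) + fderiv ℝ A Y₀ ((2:ℝ) • deriv (S i) 0))
        = b i • (((∑ j ∈ Finset.Iio i, d i j) * (∑ j ∈ Finset.Iio i, d i j)) •
              fderiv ℝ (fderiv ℝ A) Y₀ (M1 Y₀) (M1 Y₀)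
            + ((∑ j ∈ Finset.Iio i, d i j) * (∑ j ∈ Finset.Iio i, a i j)) •
              fderiv ℝ (fderiv ℝ A) Y₀ (M1 Y₀) (A Y₀)
            + ((∑ j ∈ Finset.Iio i, a i j) * (∑ j ∈ Finset.Iio i, d i j)) •
              fderiv ℝ (fderiv ℝ A) Y₀ (A Y₀) (M1 Y₀)
            + ((∑ j ∈ Finset.Iio i, a i j) * (∑ j ∈ Finset.Iio i, a i j)) •
              fderiv ℝ (fderiv ℝ A) Y₀ (A Y₀) (A Y₀))
          + b i • ((2 * ∑ j ∈ Finset.Iio i, d i j * (∑ k ∈ Finset.Iio j, d j k)) •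
              fderiv ℝ A Y₀ (fderiv ℝ M1 Y₀ (M1 Y₀))
            + (2 * ∑ j ∈ Finset.Iio i, d i j * (∑ k ∈ Finset.Iio j, a j k)) •
              fderiv ℝ A Y₀ (fderiv ℝ M1 Y₀ (A Y₀))
            + (2 * ∑ j ∈ Finset.Iio i, a i j * (∑ k ∈ Finset.Iio j, d j k)) •
              fderiv ℝ A Y₀ (fderiv ℝ A Y₀ (M1 Y₀))
            + (2 * ∑ j ∈ Finset.Iio i, a i j * (∑ k ∈ Finset.Iio j, a j k)) •
              fderiv ℝ A Y₀ (fderiv ℝ A Y₀ (A Y₀))) := by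
      intro i
      have inner : fderiv ℝ A Y₀ (deriv (S i) 0)
          = (∑ j ∈ Finset.Iio i, d i j * (∑ k ∈ Finset.Iio j, d j k)) •
              fderiv ℝ A Y₀ (fderiv ℝ M1 Y₀ (M1 Y₀))
            + (∑ j ∈ Finset.Iio i, d i j * (∑ k ∈ Finset.Iio j, a j k)) •
              fderiv ℝ A Y₀ (fderiv ℝ M1 Y₀ (A Y₀))
            + ((∑ j ∈ Finset.Iio i, a i j * (∑ k ∈ Finset.Iio j, d j k)) •
              fderiv ℝ A Y₀ (fderiv ℝ A Y₀ (M1 Y₀))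
            + (∑ j ∈ Finset.Iio i, a i j * (∑ k ∈ Finset.Iio j, a j k)) •
              fderiv ℝ A Y₀ (fderiv ℝ A Y₀ (A Y₀))) := by
        rw [hSd i, map_sum]
        have e1 : ∀ j ∈ Finset.Iio i,
            fderiv ℝ A Y₀ (d i j • fderiv ℝ M1 Y₀ (v j) + a i j • fderiv ℝ A Y₀ (v j))
            = d i j • ((∑ k ∈ Finset.Iio j, d j k) • fderiv ℝ A Y₀ (fderiv ℝ M1 Y₀ (M1 Y₀))
                + (∑ k ∈ Finset.Iio j, a j k) • fderiv ℝ A Y₀ (fderiv ℝ M1 Y₀ (A Y₀)))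
              + a i j • ((∑ k ∈ Finset.Iio j, d j k) • fderiv ℝ A Y₀ (fderiv ℝ A Y₀ (M1 Y₀))
                + (∑ k ∈ Finset.Iio j, a j k) • fderiv ℝ A Y₀ (fderiv ℝ A Y₀ (A Y₀))) := by
          intro j _
          simp only [hv, map_add, map_smul]
        rw [Finset.sum_congr rfl e1, Finset.sum_add_distrib, sark_comb2, sark_comb2]
      rw [hv i, map_smul, inner]
      simp only [map_add, map_smul, ContinuousLinearMap.add_apply, ContinuousLinearMap.smul_apply]
      module
    rw [Finset.sum_congr rfl fun i _ => hterm i, Finset.sum_add_distrib,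
      sark_comb4, sark_comb4, cdd, cda, cad, caa, q_dd, q_da, q_ad, q_aa]
    simp only [map_add, map_smul, ContinuousLinearMap.add_apply]
    module

  refine ⟨?_, ?_, ?_, ?_, ?_⟩
  · rw [hYt 0, hY0]; simp
  · rw [hYt1, hg0, hYd]; simp [hZ0]
  · rw [sark_itd_two, sark_itd_two, hYt2, key2]
  · rw [sark_itd_three, sark_itd_three, hYt3, key3]
  · -- fourth-order local error
    set P : ℝ → (Fin m → ℝ) := fun τ => Y 0 + (τ^1 • deriv Y 0
      + (τ^2 • ((2:ℝ)⁻¹ • deriv (deriv Y) 0)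
        + (τ^3 • ((6:ℝ)⁻¹ • deriv (deriv (deriv Y)) 0)
          + τ^4 • ((24:ℝ)⁻¹ • iteratedDeriv 4 Y 0)))) with hPdef
    set q : ℝ → (Fin m → ℝ) := fun τ => g 0 + (τ^1 • deriv g 0
      + (τ^2 • ((2:ℝ)⁻¹ • deriv (deriv g) 0)
        + (τ^3 • ((6:ℝ)⁻¹ • iteratedDeriv 3 g 0)
          + τ^4 • (0 : Fin m → ℝ)))) with hqdef
    have polC : ∀ (N : WithTop ℕ∞) (j : ℕ) (w : Fin m → ℝ),
        ContDiff ℝ N (fun x : ℝ => x ^ j • w) := fun N j w =>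
      (by exact contDiff_id.pow j : ContDiff ℝ N fun x : ℝ => x ^ j).smul contDiff_const
    have hPC' : ∀ N : WithTop ℕ∞, ContDiff ℝ N P := by
      intro N
      rw [hPdef]
      exact contDiff_const.add ((polC N 1 _).add ((polC N 2 _).add
        ((polC N 3 _).add (polC N 4 _))))
    have hqC' : ∀ N : WithTop ℕ∞, ContDiff ℝ N q := by
      intro N
      rw [hqdef]
      exact contDiff_const.add ((polC N 1 _).add ((polC N 2 _).add
        ((polC N 3 _).add (polC N 4 _))))
    have hPC : ContDiff ℝ ∞ P := hPC' ∞
    have hqC : ContDiff ℝ ∞ q := hqC' ∞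
    have hYP : (fun τ => Y τ - P τ) =o[𝓝 0] fun τ : ℝ => τ^4 := by
      refine sark_littleO 4 _ (ContDiff.sub (by exact_mod_cast hY)
        (hPC' _)) ?_
      intro k hk
      rw [sark_itd_sub k Y P
        (hY.of_le (by exact_mod_cast hk : (k : WithTop ℕ∞) ≤ 4)) hPC]
      show iteratedDeriv k Y 0 - iteratedDeriv k P 0 = 0
      rw [hPdef, sark_itd_P k]
      interval_cases k
      · simp [iteratedDeriv_zero]
      · rw [sark_itd_const' _ _ (by norm_num)]
        simp only [sark_mono, Finset.prod_range_succ, Finset.prod_range_zero,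
          iteratedDeriv_one]
        norm_num
      · rw [sark_itd_const' _ _ (by norm_num)]
        simp only [sark_mono, Finset.prod_range_succ, Finset.prod_range_zero,
          sark_itd_two]
        norm_num [smul_smul]
      · rw [sark_itd_const' _ _ (by norm_num)]
        simp only [sark_mono, Finset.prod_range_succ, Finset.prod_range_zero,
          sark_itd_three]
        norm_num [smul_smul]
      · rw [sark_itd_const' _ _ (by norm_num)]
        simp only [sark_mono, Finset.prod_range_succ, Finset.prod_range_zero]
        norm_num [smul_smul]
    have hgq : (fun τ => g τ - q τ) =o[𝓝 0] fun τ : ℝ => τ^3 := by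
      refine sark_littleO 3 _ (ContDiff.sub (by exact_mod_cast hgC)
        (hqC' _)) ?_
      intro k hk
      rw [sark_itd_sub k g q
        (hgC.of_le (by exact_mod_cast hk : (k : WithTop ℕ∞) ≤ 3)) hqC]
      show iteratedDeriv k g 0 - iteratedDeriv k q 0 = 0
      rw [hqdef, sark_itd_P k]
      interval_cases k
      · simp [iteratedDeriv_zero]
      · rw [sark_itd_const' _ _ (by norm_num)]
        simp only [sark_mono, Finset.prod_range_succ, Finset.prod_range_zero,
          iteratedDeriv_one]
        norm_num
      · rw [sark_itd_const' _ _ (by norm_num)]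
        simp only [sark_mono, Finset.prod_range_succ, Finset.prod_range_zero,
          sark_itd_two]
        norm_num [smul_smul]
      · rw [sark_itd_const' _ _ (by norm_num)]
        simp only [sark_mono, Finset.prod_range_succ, Finset.prod_range_zero,
          sark_itd_three]
        norm_num [smul_smul]
    have hrel1 : deriv Y 0 = g 0 := by rw [hYd]; simp [hZ0, hg0]
    have hrel2 : (2:ℝ)⁻¹ • deriv (deriv Y) 0 = deriv g 0 := by rw [← key2]; module
    have hrel3 : (6:ℝ)⁻¹ • deriv (deriv (deriv Y)) 0 = (2:ℝ)⁻¹ • deriv (deriv g) 0 := by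
      rw [← key3]; module
    have hdecomp : (fun τ : ℝ => Y τ - Yt τ)
        = fun τ => ((Y τ - P τ) - τ • (g τ - q τ))
          + τ^4 • ((24:ℝ)⁻¹ • iteratedDeriv 4 Y 0 - (6:ℝ)⁻¹ • iteratedDeriv 3 g 0) := by
      funext τ
      rw [hYt τ, hPdef, hqdef, ← hY0]
      simp only [hrel1, hrel2, hrel3]
      module
    have hbig2 : (fun τ : ℝ => τ • (g τ - q τ)) =O[𝓝 0] fun τ : ℝ => τ^4 := by
      have h := (isBigO_refl (fun τ : ℝ => τ) (𝓝 0)).smul hgq.isBigO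
      have e : (fun τ : ℝ => τ • τ^3) = fun τ : ℝ => τ^4 := funext fun τ => by
        simp only [smul_eq_mul]; ring
      rwa [e] at h
    have hbig3 : (fun τ : ℝ => τ^4 • ((24:ℝ)⁻¹ • iteratedDeriv 4 Y 0
        - (6:ℝ)⁻¹ • iteratedDeriv 3 g 0)) =O[𝓝 0] fun τ : ℝ => τ^4 := by
      refine IsBigO.of_bound ‖(24:ℝ)⁻¹ • iteratedDeriv 4 Y 0
        - (6:ℝ)⁻¹ • iteratedDeriv 3 g 0‖ ?_
      filter_upwards with τ
      rw [norm_smul]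
      exact le_of_eq (mul_comm _ _)
    rw [hdecomp]
    exact (hYP.isBigO.sub hbig2).add hbig3
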